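/- Let ε > 0, c ∈ ℝ, and Ω ⊂ ℝᵈ (d ≤ 3) a bounded Lipschitz domain. Define for ψ ∈ Ḣ¹(Ω) the functional ⟨S(ψ), ψ⟩ = ε⁻¹∫_Ω (ψ+c)³ψ dx + ε∫_Ω |∇ψ|² dx. Then there exist constants C₁ = C₁(ε) > 0 and C₂ = C₂(ε, |Ω|, |c|) ≥ 0 such that ⟨S(ψ), ψ⟩ ≥ C₁‖ψ‖²_{H¹(Ω)} − C₂ for all ψ ∈ Ḣ¹(Ω). In particular ⟨S(ψ),ψ⟩/‖ψ‖_{H¹} → +∞ as ‖ψ‖_{H¹} → ∞. -/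

import Mathlib

open MeasureTheory

/-- Coercivity of the convex-split Cahn–Hilliard operator:
`⟨S(ψ),ψ⟩ = ε⁻¹∫(ψ+c)³ψ + ε∫|∇ψ|² ≥ C₁‖ψ‖²_{H¹} − C₂` on zero-mean `H¹`
functions over a bounded domain satisfying a Poincaré–Wirtinger inequality. -/
theorem stmt_7 {d : ℕ} (hd1 : 1 ≤ d) (hd3 : d ≤ 3) (ε c : ℝ) (hε : 0 < ε)
    (Ω : Set (EuclideanSpace ℝ (Fin d))) (hΩb : Bornology.IsBounded Ω)
    (hΩm : MeasurableSet Ω) (Cp : ℝ) (hCp : 0 < Cp)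
    (hPoin : ∀ ψ : EuclideanSpace ℝ (Fin d) → ℝ, Differentiable ℝ ψ →
      IntegrableOn (fun x => (ψ x)^2) Ω →
      IntegrableOn (fun x => ‖gradient ψ x‖^2) Ω →
      (∫ x in Ω, ψ x) = 0 →
      (∫ x in Ω, (ψ x)^2) ≤ Cp * ∫ x in Ω, ‖gradient ψ x‖^2) :
    ∃ C₁ > 0, ∃ C₂ ≥ 0, ∀ ψ : EuclideanSpace ℝ (Fin d) → ℝ,
      Differentiable ℝ ψ →
      IntegrableOn (fun x => (ψ x)^2) Ω →
      IntegrableOn (fun x => (ψ x)^4) Ω →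
      IntegrableOn (fun x => ‖gradient ψ x‖^2) Ω →
      (∫ x in Ω, ψ x) = 0 →
      C₁ * ((∫ x in Ω, (ψ x)^2) + ∫ x in Ω, ‖gradient ψ x‖^2) - C₂ ≤
        ε⁻¹ * (∫ x in Ω, (ψ x + c)^3 * ψ x)
          + ε * ∫ x in Ω, ‖gradient ψ x‖^2 := by
  have hμ : MeasureTheory.volume Ω < ⊤ := hΩb.measure_lt_top
  refine ⟨ε / (Cp + 1), by positivity,
    ε⁻¹ * (c ^ 4 / 4) * (MeasureTheory.volume Ω).toReal, by positivity, ?_⟩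
  intro ψ hψ h2 h4 hg hmean
  have hP := hPoin ψ hψ h2 hg hmean
  set D := ∫ x in Ω, ‖gradient ψ x‖ ^ 2 with hDdef
  have hDnn : 0 ≤ D := setIntegral_nonneg hΩm (fun x _ => by positivity)
  have hcont : Continuous ψ := hψ.continuous
  -- integrability of the quartic term
  have hint : IntegrableOn (fun x => (ψ x + c) ^ 3 * ψ x) Ω := by
    have hmeas : AEStronglyMeasurable (fun x => (ψ x + c) ^ 3 * ψ x)
        (MeasureTheory.volume.restrict Ω) :=
      (((hcont.add continuous_const).pow 3).mul hcont).aestronglyMeasurable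
    have hbound : IntegrableOn (fun x => 16 * (ψ x) ^ 4 + 17 * c ^ 4) Ω :=
      (h4.const_mul 16).add (integrableOn_const hμ.ne)
    refine hbound.mono' hmeas (Filter.Eventually.of_forall fun x => ?_)
    rw [Real.norm_eq_abs, abs_le]
    constructor <;>
      nlinarith [sq_nonneg ((ψ x + c) ^ 2 - c * (ψ x + c)),
        sq_nonneg ((ψ x + c) ^ 2 + c * (ψ x + c)), sq_nonneg (ψ x + c),
        sq_nonneg (ψ x - c), sq_nonneg (ψ x * c), sq_nonneg ((ψ x) ^ 2 - c ^ 2),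
        sq_nonneg ((ψ x) ^ 2 + c ^ 2), sq_nonneg (ψ x), sq_nonneg c,
        sq_nonneg ((ψ x) ^ 2 - c * ψ x), sq_nonneg ((ψ x) ^ 2 + c * ψ x)]
  -- lower bound for the quartic integral
  have hI : -(c ^ 4 / 4) * (MeasureTheory.volume Ω).toReal ≤
      ∫ x in Ω, (ψ x + c) ^ 3 * ψ x := by
    have hmono := setIntegral_mono_on
      (integrableOn_const hμ.ne :
        IntegrableOn (fun _ => -(c ^ 4 / 4)) Ω MeasureTheory.volume)
      hint hΩm (fun x _ => by
        have h1 := sq_nonneg ((ψ x + c) ^ 2 - c * (ψ x + c))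
        have h2 := sq_nonneg ((ψ x + c) ^ 2 - c ^ 2)
        have h3 := sq_nonneg (ψ x + c)
        nlinarith)
    simpa [setIntegral_const, smul_eq_mul, mul_comm, measureReal_def] using hmono
  have hI2 : -(ε⁻¹ * (c ^ 4 / 4) * (MeasureTheory.volume Ω).toReal) ≤
      ε⁻¹ * ∫ x in Ω, (ψ x + c) ^ 3 * ψ x := by
    have := mul_le_mul_of_nonneg_left hI (inv_nonneg.mpr hε.le)
    linarith
  have h1 : ε / (Cp + 1) * ((∫ x in Ω, (ψ x) ^ 2) + D) ≤ ε * D := by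
    rw [div_mul_eq_mul_div, div_le_iff₀ (by positivity)]
    nlinarith [mul_le_mul_of_nonneg_left hP hε.le]
  linarith
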